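/- If the h-vector \(b_i\) is tangent to the hypersurface (\(b_jB^j = 0\)), then \(\overline{B}^i = B^i/\sqrt{p}\) is the unit normal of the transformed hypersurface: \(\overline{g}_{ij}B^i_\alpha \overline{B}^j = 0\) and \(\overline{g}_{ij}\overline{B}^i\overline{B}^j = 1\); consequently \(\overline{B}_i = \overline{g}_{ij}\overline{B}^j = \sqrt{p}\, B_i\). -/

import Mathlib

/-- If the h-vector is tangent to the hypersurface, then `B̄ⁱ = Bⁱ/√p` is the unit
normal of the transformed hypersurface, and `B̄ᵢ = ḡᵢⱼB̄ʲ = √p Bᵢ`. -/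
theorem transformed_unit_normal
    {n m : ℕ} (g : Fin n → Fin n → ℝ) (l mm Bn : Fin n → ℝ)
    (B : Fin n → Fin m → ℝ)
    (p p1 p2 p3 : ℝ) (hp : 0 < p)
    (gbar : Fin n → Fin n → ℝ)
    (hgbar : ∀ i j, gbar i j =
      p * g i j + p1 * (l i * l j) + p2 * (mm i * l j + mm j * l i) + p3 * (mm i * mm j))
    (hnorm : ∀ α, ∑ i, ∑ j, g i j * B i α * Bn j = 0)
    (hunit : ∑ i, ∑ j, g i j * Bn i * Bn j = 1)
    (hlB : ∑ i, l i * Bn i = 0)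
    (hmB : ∑ i, mm i * Bn i = 0)
    (Bnbar : Fin n → ℝ) (hBnbar : ∀ i, Bnbar i = Bn i / Real.sqrt p)
    (Bncov : Fin n → ℝ) (hBncov : ∀ i, Bncov i = ∑ j, g i j * Bn j) :
    (∀ α, ∑ i, ∑ j, gbar i j * B i α * Bnbar j = 0) ∧
    (∑ i, ∑ j, gbar i j * Bnbar i * Bnbar j = 1) ∧
    (∀ i, ∑ j, gbar i j * Bnbar j = Real.sqrt p * Bncov i) := by
  have hs : Real.sqrt p ≠ 0 := by positivity
  have hsq : Real.sqrt p * Real.sqrt p = p := Real.mul_self_sqrt hp.le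
  refine ⟨?_, ?_, ?_⟩
  · intro α
    have h1 : ∀ i j, gbar i j * B i α * Bnbar j =
        (p * (g i j * B i α * Bn j)
         + (p1 * (l i * B i α)) * (l j * Bn j)
         + (p2 * (mm i * B i α)) * (l j * Bn j)
         + (p2 * (l i * B i α)) * (mm j * Bn j)
         + (p3 * (mm i * B i α)) * (mm j * Bn j)) / Real.sqrt p := by
      intro i j; rw [hgbar, hBnbar]; ring
    simp only [h1, Finset.sum_add_distrib, ← Finset.mul_sum, hlB, hmB, mul_zero,
      add_zero, ← Finset.sum_div, Finset.sum_const_zero]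
    rw [hnorm α, mul_zero, zero_div]
  · have h1 : ∀ i j : Fin n, gbar i j * Bnbar i * Bnbar j =
        ((g i j * Bn i * Bn j)
         + ((p1/p) * (l i * Bn i)) * (l j * Bn j)
         + ((p2/p) * (mm i * Bn i)) * (l j * Bn j)
         + ((p2/p) * (l i * Bn i)) * (mm j * Bn j)
         + ((p3/p) * (mm i * Bn i)) * (mm j * Bn j)) := by
      intro i j; rw [hgbar, hBnbar, hBnbar]
      field_simp
      ring_nf
      rw [Real.sq_sqrt hp.le]
      ring
    simp only [h1, Finset.sum_add_distrib, ← Finset.mul_sum, hlB, hmB, mul_zero,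
      add_zero, Finset.sum_const_zero, zero_mul]
    exact hunit
  · intro i
    have h1 : ∀ j, gbar i j * Bnbar j =
        Real.sqrt p * (g i j * Bn j)
         + ((p1 * l i + p2 * mm i) / Real.sqrt p) * (l j * Bn j)
         + ((p2 * l i + p3 * mm i) / Real.sqrt p) * (mm j * Bn j) := by
      intro j; rw [hgbar, hBnbar]
      field_simp
      ring_nf
      rw [Real.sq_sqrt hp.le]
      ring
    simp only [h1, Finset.sum_add_distrib, ← Finset.mul_sum, hlB, hmB, mul_zero,
      add_zero, hBncov]
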